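/- Let m ≥ 1 and let Ω : ℝᵐ × ℝᵐ → ℝ be continuously differentiable and satisfy the cocycle identity Ω(x,z) = Ω(x,y) + Ω(y,z) for all x, y, z ∈ ℝᵐ. Define the 1-form ω on ℝᵐ by ω_x(v) := (d/dt)|_{t=0} Ω(x, x + t·v). Then for every continuously differentiable path γ : [a,b] → ℝᵐ and every partition a = t_0 < t_1 < ⋯ < t_k = b, Σ_{i=0}^{k−1} Ω(γ(t_i), γ(t_{i+1})) = Ω(γ(a), γ(b)) = ∫_a^b ω_{γ(t)}(γ′(t)) dt. -/

import Mathlib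

/-- If `Ω : ℝᵐ × ℝᵐ → ℝ` is a continuously differentiable cocycle on the pair
groupoid of `ℝᵐ`, with van Est image the 1-form `ω_x(v) = (d/dt)|_{t=0} Ω(x, x + t·v)`, then for
every C¹ path `γ : [a,b] → ℝᵐ` and every partition `a = t_0 < ⋯ < t_k = b`, the Riemann-like sum
`Σ_i Ω(γ(t_i), γ(t_{i+1}))` equals `Ω(γ(a), γ(b))`, which equals `∫_a^b ω_{γ(t)}(γ′(t)) dt`. -/

lemma fin_telescope {k : ℕ} (G : Fin (k + 1) → ℝ) :
    ∑ i : Fin k, (G i.succ - G i.castSucc) = G (Fin.last k) - G 0 := by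
  induction k with
  | zero => simp
  | succ n ih =>
    rw [Fin.sum_univ_castSucc]
    have := ih (fun j => G j.castSucc)
    have h1 : ∀ i : Fin n, G i.succ.castSucc = G i.castSucc.succ := by
      intro i; rw [Fin.succ_castSucc]
    calc ∑ i : Fin n, (G i.castSucc.succ - G i.castSucc.castSucc)
          + (G (Fin.last n).succ - G (Fin.last n).castSucc)
        = (∑ i : Fin n, ((fun j => G j.castSucc) i.succ - (fun j => G j.castSucc) i.castSucc))
          + (G (Fin.last n).succ - G (Fin.last n).castSucc) := by
          simp only [Fin.succ_castSucc]
      _ = (G (Fin.last n).castSucc - G (0 : Fin (n+1)).castSucc)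
          + (G (Fin.last n).succ - G (Fin.last n).castSucc) := by rw [this]
      _ = G (Fin.last (n + 1)) - G 0 := by
          rw [Fin.succ_last, Fin.castSucc_zero]; ring

theorem cocycle_pullback_riemann_sum_exact
    (m : ℕ) (hm : 1 ≤ m)
    (Ω : (Fin m → ℝ) × (Fin m → ℝ) → ℝ) (hΩ : ContDiff ℝ 1 Ω)
    (hcoc : ∀ x y z : Fin m → ℝ, Ω (x, z) = Ω (x, y) + Ω (y, z))
    (a b : ℝ) (hab : a < b)
    (γ γ' : ℝ → Fin m → ℝ)
    (hγ : ∀ t ∈ Set.Icc a b, HasDerivAt γ (γ' t) t)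
    (hγ' : ContinuousOn γ' (Set.Icc a b))
    (k : ℕ) (t : Fin (k + 1) → ℝ)
    (hmono : StrictMono t) (h0 : t 0 = a) (hlast : t (Fin.last k) = b) :
    (∑ i : Fin k, Ω (γ (t i.castSucc), γ (t i.succ))) = Ω (γ a, γ b) ∧
    Ω (γ a, γ b) = ∫ s in a..b, deriv (fun u : ℝ => Ω (γ s, γ s + u • γ' s)) 0 := by
  -- a primitive for Ω
  set g : (Fin m → ℝ) → ℝ := fun y => Ω (0, y) with hg_def
  have hzero : Ω ((0 : Fin m → ℝ), 0) = 0 := by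
    have := hcoc 0 0 0; linarith
  have hΩeq : ∀ x y : Fin m → ℝ, Ω (x, y) = g y - g x := by
    intro x y
    have h1 := hcoc x 0 y
    have h2 := hcoc 0 x 0
    simp only [hg_def]
    linarith [hzero]
  have hg : ContDiff ℝ 1 g := hΩ.comp (contDiff_const.prodMk contDiff_id)
  constructor
  · -- telescoping sum
    have heq : ∀ i : Fin k, Ω (γ (t i.castSucc), γ (t i.succ)) =
        (fun j : Fin (k+1) => g (γ (t j))) i.succ - (fun j : Fin (k+1) => g (γ (t j))) i.castSucc :=
      fun i => hΩeq _ _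
    rw [Finset.sum_congr rfl (fun i _ => heq i), fin_telescope (fun j : Fin (k+1) => g (γ (t j)))]
    simp only [hlast, h0]
    rw [hΩeq]
  · -- integral part
    have hg' : Differentiable ℝ g := hg.differentiable one_ne_zero
    have hderiv_eq : ∀ s : ℝ, deriv (fun u : ℝ => Ω (γ s, γ s + u • γ' s)) 0 =
        fderiv ℝ g (γ s) (γ' s) := by
      intro s
      have h1 : HasDerivAt (fun u : ℝ => γ s + u • γ' s) (γ' s) 0 := by
        have := ((hasDerivAt_id (0 : ℝ)).smul_const (γ' s)).const_add (γ s)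
        simpa using this
      have h2 : HasFDerivAt g (fderiv ℝ g (γ s)) (γ s + (0 : ℝ) • γ' s) := by
        simpa using (hg' (γ s)).hasFDerivAt
      have h3 : HasDerivAt (fun u : ℝ => g (γ s + u • γ' s)) (fderiv ℝ g (γ s) (γ' s)) 0 :=
        by have := h2.comp_hasDerivAt 0 h1; exact this
      have h4 : HasDerivAt (fun u : ℝ => Ω (γ s, γ s + u • γ' s))
          (fderiv ℝ g (γ s) (γ' s)) 0 := by
        have := h3.sub_const (g (γ s))
        apply this.congr_of_eventuallyEq
        filter_upwards with u
        rw [hΩeq]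
      exact h4.deriv
    simp only [hderiv_eq]
    have hγcont : ContinuousOn γ (Set.Icc a b) := fun s hs => (hγ s hs).continuousAt.continuousWithinAt
    have hcont : ContinuousOn (fun s => fderiv ℝ g (γ s) (γ' s)) (Set.Icc a b) := by
      apply ContinuousOn.clm_apply _ hγ'
      exact (hg.continuous_fderiv one_ne_zero).comp_continuousOn hγcont
    have hint : IntervalIntegrable (fun s => fderiv ℝ g (γ s) (γ' s))
        MeasureTheory.volume a b := by
      apply ContinuousOn.intervalIntegrable
      rwa [Set.uIcc_of_le hab.le]
    have hFTC : ∫ s in a..b, fderiv ℝ g (γ s) (γ' s) = g (γ b) - g (γ a) := by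
      apply intervalIntegral.integral_eq_sub_of_hasDerivAt _ hint
      intro s hs
      rw [Set.uIcc_of_le hab.le] at hs
      exact (hg' (γ s)).hasFDerivAt.comp_hasDerivAt s (hγ s hs)
    rw [hFTC, hΩeq]
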